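/- Let ε ∈ (0, 1/9) and let S be a finite nonempty subset of the closed unit ball of ℝ^m (vectors of ℓ₂-norm at most 1). If u and v are drawn independently and uniformly at random from S, then Pr[⟨u,v⟩ ≥ -3ε] > 2ε. -/

import Mathlib

open Finset

theorem stmt0 (m : ℕ) (ε : ℝ) (hε : 0 < ε) (hε9 : ε < 1/9)
    (S : Finset (EuclideanSpace ℝ (Fin m))) (hS : S.Nonempty)
    (hball : ∀ u ∈ S, ‖u‖ ≤ 1) :
    (((S ×ˢ S).filter (fun p => (inner ℝ p.1 p.2 : ℝ) ≥ -3*ε)).card : ℝ)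
      / ((S.card : ℝ) * S.card) > 2*ε := by
  classical
  set P := S ×ˢ S with hP
  set G := P.filter (fun p => (inner ℝ p.1 p.2 : ℝ) ≥ -3*ε) with hGdef
  set B := P.filter (fun p => ¬ ((inner ℝ p.1 p.2 : ℝ) ≥ -3*ε)) with hBdef
  have hsum0 : (0:ℝ) ≤ ∑ p ∈ P, (inner ℝ p.1 p.2 : ℝ) := by
    have h : ∑ p ∈ P, (inner ℝ p.1 p.2 : ℝ)
        = inner ℝ (∑ u ∈ S, u) (∑ u ∈ S, u) := by
      rw [hP, Finset.sum_product, sum_inner]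
      exact Finset.sum_congr rfl fun u _ => (inner_sum _ _ _).symm
    rw [h]
    exact real_inner_self_nonneg
  have hsplit : ∑ p ∈ G, (inner ℝ p.1 p.2 : ℝ)
      + ∑ p ∈ B, (inner ℝ p.1 p.2 : ℝ) = ∑ p ∈ P, (inner ℝ p.1 p.2 : ℝ) :=
    Finset.sum_filter_add_sum_filter_not _ _ _
  have hGle : ∑ p ∈ G, (inner ℝ p.1 p.2 : ℝ) ≤ (G.card : ℝ) := by
    calc ∑ p ∈ G, (inner ℝ p.1 p.2 : ℝ) ≤ ∑ p ∈ G, (1:ℝ) := by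
          refine Finset.sum_le_sum fun p hp => ?_
          have hpP : p ∈ P := Finset.mem_of_mem_filter _ hp
          rw [hP, Finset.mem_product] at hpP
          calc (inner ℝ p.1 p.2 : ℝ) ≤ ‖p.1‖ * ‖p.2‖ := real_inner_le_norm _ _
            _ ≤ 1 * 1 := by
                exact mul_le_mul (hball _ hpP.1) (hball _ hpP.2)
                  (norm_nonneg _) (le_trans (norm_nonneg _) (hball _ hpP.1))
            _ = 1 := by ring
      _ = (G.card : ℝ) := by simp
  have hBle : ∑ p ∈ B, (inner ℝ p.1 p.2 : ℝ) ≤ (-3*ε) * (B.card : ℝ) := by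
    calc ∑ p ∈ B, (inner ℝ p.1 p.2 : ℝ) ≤ ∑ p ∈ B, (-3*ε) := by
          refine Finset.sum_le_sum fun p hp => ?_
          have := (Finset.mem_filter.mp hp).2
          linarith [lt_of_not_ge this]
      _ = (-3*ε) * (B.card : ℝ) := by
          rw [Finset.sum_const]; ring
  have hcard : (G.card : ℝ) + (B.card : ℝ) = (S.card : ℝ) * (S.card : ℝ) := by
    have hnat : G.card + B.card = S.card * S.card := by
      rw [hGdef, hBdef, Finset.card_filter_add_card_filter_not,
        hP, Finset.card_product]
    exact_mod_cast hnat
  have hScard : (0:ℝ) < (S.card : ℝ) := by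
    exact_mod_cast hS.card_pos
  rw [gt_iff_lt, lt_div_iff₀ (by positivity)]
  nlinarith [sq_nonneg ((S.card : ℝ)), mul_pos hScard hScard]
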